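/- Let X = {1,…,6}, let X′ = {1′,…,6′} be a disjoint copy of X, and let S be the set of 2-element subsets of X. Let Ω_X be the simple graph on the 27-element vertex set X ⊔ X′ ⊔ S whose adjacencies are exactly: x ∈ X adjacent to y′ ∈ X′ iff x ≠ y; x ∈ X adjacent to s ∈ S iff x ∈ s; x′ ∈ X′ adjacent to s ∈ S iff x ∈ s; s₁, s₂ ∈ S adjacent iff s₁ ∩ s₂ = ∅ (in particular, no edges within X and no edges within X′). Then the graph Ω is isomorphic to Ω_X as a simple graph. -/

import Mathlib

open scoped TensorProduct

/-- The lattice `L = ℤ⁷` with standard basis `ℓ, e₁, …, e₆`. -/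
abbrev L : Type := Fin 7 → ℤ

/-- The symmetric bilinear form `B(x,y) = x₀y₀ − x₁y₁ − ⋯ − x₆y₆`. -/
def B (x y : L) : ℤ :=
  x 0 * y 0 - (x 1 * y 1 + x 2 * y 2 + x 3 * y 3 + x 4 * y 4 + x 5 * y 5 + x 6 * y 6)

/-- `h = 3ℓ − e₁ − ⋯ − e₆`, the hyperplane class, with `B(h,h) = 3`. -/
def hv : L := ![3, -1, -1, -1, -1, -1, -1]

/-- The set of lines: `Y = {y ∈ L : B(h,y) = 1 ∧ B(y,y) = −1}`. -/
def Yset : Set L := {y | B hv y = 1 ∧ B y y = -1}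

/-- The set of roots: `R = {α ∈ L : B(h,α) = 0 ∧ B(α,α) = −2}`. -/
def Rset : Set L := {a | B hv a = 0 ∧ B a a = -2}

lemma B_comm (x y : L) : B x y = B y x := by unfold B; ring

/-- The graph `Ω` on the 27 lines: distinct `y, y′` adjacent iff `B(y,y′) = 1`. -/
def Ω : SimpleGraph ↥Yset where
  Adj a b := a ≠ b ∧ B a.1 b.1 = 1
  symm := by
    constructor
    rintro a b ⟨hne, hB⟩
    exact ⟨hne.symm, by rw [B_comm]; exact hB⟩
  loopless := by constructor; rintro a ⟨hne, _⟩; exact hne rfl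

/-- The vertex set of Schläfli's combinatorial graph: `X ⊔ X′ ⊔ S`, where
`X = {1,…,6}`, `X′` is a disjoint copy of `X`, and `S` is the set of 2-element subsets
of `X`. -/
abbrev VX : Type := Fin 6 ⊕ Fin 6 ⊕ {s : Finset (Fin 6) // s.card = 2}

/-- The adjacency relation of the combinatorial graph `Ω_X`. -/
def AdjX : VX → VX → Prop
  | Sum.inl _, Sum.inl _ => False
  | Sum.inl x, Sum.inr (Sum.inl y) => x ≠ y
  | Sum.inl x, Sum.inr (Sum.inr s) => x ∈ s.1
  | Sum.inr (Sum.inl x), Sum.inl y => x ≠ y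
  | Sum.inr (Sum.inl _), Sum.inr (Sum.inl _) => False
  | Sum.inr (Sum.inl x), Sum.inr (Sum.inr s) => x ∈ s.1
  | Sum.inr (Sum.inr s), Sum.inl x => x ∈ s.1
  | Sum.inr (Sum.inr s), Sum.inr (Sum.inl x) => x ∈ s.1
  | Sum.inr (Sum.inr s), Sum.inr (Sum.inr t) => s.1 ∩ t.1 = ∅

/-- Schläfli's combinatorial graph `Ω_X` on 27 vertices. -/
def ΩX : SimpleGraph VX where
  Adj := AdjX
  symm := by
    constructor
    rintro (x | x | s) (y | y | t) h
    · exact h.elim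
    · exact Ne.symm h
    · exact h
    · exact Ne.symm h
    · exact h.elim
    · exact h
    · exact h
    · exact h
    · show t.1 ∩ s.1 = ∅
      rw [Finset.inter_comm]
      exact h
  loopless := by
    constructor
    rintro (x | x | s) h
    · exact h.elim
    · exact h.elim
    · have h' : s.1 ∩ s.1 = ∅ := h
      rw [Finset.inter_self] at h'
      have h2 := s.2
      rw [h', Finset.card_empty] at h2
      exact absurd h2 (by norm_num)

section SchlafliAux

/-- Helper: if six integers satisfy `Σ x² = Σ x`, each lies in `{0,1}`. -/
lemma key01 (a b c d e f : ℤ)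
    (hq : a*a + b*b + c*c + d*d + e*e + f*f = a + b + c + d + e + f) :
    a = 1 ∨ a = 0 := by
  have n : ∀ x : ℤ, 0 ≤ x * (x - 1) := by
    intro x
    rcases le_or_gt x 0 with h | h
    · nlinarith
    · exact mul_nonneg (by omega) (by omega)
  have hz : a * (a - 1) = 0 := by nlinarith [n a, n b, n c, n d, n e, n f]
  rcases mul_eq_zero.mp hz with h | h <;> omega

/-- Helper: if six integers satisfy `Σ x² = −Σ x`, each lies in `{−1,0}`. -/
lemma keyneg (a b c d e f : ℤ)
    (hq : a*a + b*b + c*c + d*d + e*e + f*f = -(a + b + c + d + e + f)) :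
    a = -1 ∨ a = 0 := by
  have n : ∀ x : ℤ, 0 ≤ x * (x + 1) := by
    intro x
    rcases le_or_gt x 0 with h | h
    · rcases le_or_gt x (-1) with h' | h'
      · nlinarith
      · have : x = 0 := by omega
        simp [this]
    · exact mul_nonneg (by omega) (by omega)
  have hz : a * (a + 1) = 0 := by nlinarith [n a, n b, n c, n d, n e, n f]
  rcases mul_eq_zero.mp hz with h | h <;> omega

lemma pick_one (v : Fin 6 → ℤ) (h : ∀ i, v i = 1 ∨ v i = 0)
    (hs : v 0 + v 1 + v 2 + v 3 + v 4 + v 5 = 1) :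
    ∃ i : Fin 6, ∀ j, v j = if j = i then 1 else 0 := by
  have hcard : (Finset.univ.filter fun i => v i = 1).card = 1 := by
    rw [Finset.card_filter, Fin.sum_univ_six]
    rcases h 0 with e0|e0 <;> rcases h 1 with e1|e1 <;> rcases h 2 with e2|e2 <;>
      rcases h 3 with e3|e3 <;> rcases h 4 with e4|e4 <;> rcases h 5 with e5|e5 <;>
      simp_all
  obtain ⟨i, hi⟩ := Finset.card_eq_one.mp hcard
  refine ⟨i, fun j => ?_⟩
  have hj : v j = 1 ↔ j = i := by
    have := Finset.ext_iff.mp hi j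
    simpa using this
  split_ifs with hji
  · exact hj.mpr hji
  · rcases h j with e|e
    · exact absurd (hj.mp e) hji
    · exact e

lemma pick_two (v : Fin 6 → ℤ) (h : ∀ i, v i = -1 ∨ v i = 0)
    (hs : v 0 + v 1 + v 2 + v 3 + v 4 + v 5 = -2) :
    ∃ s : Finset (Fin 6), s.card = 2 ∧ ∀ j, v j = if j ∈ s then -1 else 0 := by
  refine ⟨Finset.univ.filter fun i => v i = -1, ?_, fun j => ?_⟩
  · rw [Finset.card_filter, Fin.sum_univ_six]
    rcases h 0 with e0|e0 <;> rcases h 1 with e1|e1 <;> rcases h 2 with e2|e2 <;>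
      rcases h 3 with e3|e3 <;> rcases h 4 with e4|e4 <;> rcases h 5 with e5|e5 <;>
      simp_all
  · simp only [Finset.mem_filter, Finset.mem_univ, true_and]
    rcases h j with e|e <;> simp [e]

lemma pick_five (v : Fin 6 → ℤ) (h : ∀ i, v i = -1 ∨ v i = 0)
    (hs : v 0 + v 1 + v 2 + v 3 + v 4 + v 5 = -5) :
    ∃ i : Fin 6, ∀ j, v j = if j = i then 0 else -1 := by
  have hcard : (Finset.univ.filter fun i => v i = 0).card = 1 := by
    rw [Finset.card_filter, Fin.sum_univ_six]
    rcases h 0 with e0|e0 <;> rcases h 1 with e1|e1 <;> rcases h 2 with e2|e2 <;>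
      rcases h 3 with e3|e3 <;> rcases h 4 with e4|e4 <;> rcases h 5 with e5|e5 <;>
      simp_all
  obtain ⟨i, hi⟩ := Finset.card_eq_one.mp hcard
  refine ⟨i, fun j => ?_⟩
  have hj : v j = 0 ↔ j = i := by
    have := Finset.ext_iff.mp hi j
    simpa using this
  split_ifs with hji
  · exact hj.mpr hji
  · rcases h j with e|e
    · exact e
    · exact absurd (hj.mp e) hji

end SchlafliAux

/-- The explicit 27 lines: `aᵢ = eᵢ`, `bᵢ = 2ℓ − Σe + eᵢ`, `c_{ij} = ℓ − eᵢ − e_j`. -/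
def gmap : VX → L
  | Sum.inl i => Fin.cons 0 (fun j => if j = i then 1 else 0)
  | Sum.inr (Sum.inl i) => Fin.cons 2 (fun j => if j = i then 0 else -1)
  | Sum.inr (Sum.inr s) => Fin.cons 1 (fun j => if j ∈ s.1 then -1 else 0)

instance : DecidableRel AdjX := fun u v =>
  match u, v with
  | Sum.inl _, Sum.inl _ => inferInstanceAs (Decidable False)
  | Sum.inl x, Sum.inr (Sum.inl y) => inferInstanceAs (Decidable (x ≠ y))
  | Sum.inl x, Sum.inr (Sum.inr s) => inferInstanceAs (Decidable (x ∈ s.1))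
  | Sum.inr (Sum.inl x), Sum.inl y => inferInstanceAs (Decidable (x ≠ y))
  | Sum.inr (Sum.inl _), Sum.inr (Sum.inl _) => inferInstanceAs (Decidable False)
  | Sum.inr (Sum.inl x), Sum.inr (Sum.inr s) => inferInstanceAs (Decidable (x ∈ s.1))
  | Sum.inr (Sum.inr s), Sum.inl x => inferInstanceAs (Decidable (x ∈ s.1))
  | Sum.inr (Sum.inr s), Sum.inr (Sum.inl x) => inferInstanceAs (Decidable (x ∈ s.1))
  | Sum.inr (Sum.inr s), Sum.inr (Sum.inr t) => inferInstanceAs (Decidable (s.1 ∩ t.1 = ∅))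

set_option maxHeartbeats 4000000 in
lemma gmap_mem' : ∀ u : VX, B hv (gmap u) = 1 ∧ B (gmap u) (gmap u) = -1 := by decide

lemma gmap_mem (u : VX) : gmap u ∈ Yset := gmap_mem' u

set_option maxHeartbeats 4000000 in
lemma adj_gmap : ∀ u v : VX, B (gmap u) (gmap v) = 1 ↔ AdjX u v := by decide

set_option maxHeartbeats 4000000 in
lemma gmap_inj' : ∀ u v : VX, gmap u = gmap v → u = v := by decide

set_option maxHeartbeats 1000000 in
/-- Every line is one of the 27 vectors. -/
lemma gmap_surj (y : L) (hy : y ∈ Yset) : ∃ u : VX, gmap u = y := by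
  obtain ⟨ha, hb⟩ := hy
  rw [B] at ha hb
  have e0 : hv 0 = 3 := rfl
  have e1 : hv 1 = -1 := rfl
  have e2 : hv 2 = -1 := rfl
  have e3 : hv 3 = -1 := rfl
  have e4 : hv 4 = -1 := rfl
  have e5 : hv 5 = -1 := rfl
  have e6 : hv 6 = -1 := rfl
  rw [e0, e1, e2, e3, e4, e5, e6] at ha
  have hsum : y 1 + y 2 + y 3 + y 4 + y 5 + y 6 = 1 - 3 * y 0 := by linarith
  have hsq : y 1*y 1 + y 2*y 2 + y 3*y 3 + y 4*y 4 + y 5*y 5 + y 6*y 6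
      = y 0 * y 0 + 1 := by linarith
  clear ha hb
  have cs : (y 1 + y 2 + y 3 + y 4 + y 5 + y 6)^2 ≤
      6 * (y 1*y 1 + y 2*y 2 + y 3*y 3 + y 4*y 4 + y 5*y 5 + y 6*y 6) := by
    nlinarith [sq_nonneg (y 1 - y 2), sq_nonneg (y 1 - y 3), sq_nonneg (y 1 - y 4),
      sq_nonneg (y 1 - y 5), sq_nonneg (y 1 - y 6), sq_nonneg (y 2 - y 3),
      sq_nonneg (y 2 - y 4), sq_nonneg (y 2 - y 5), sq_nonneg (y 2 - y 6),
      sq_nonneg (y 3 - y 4), sq_nonneg (y 3 - y 5), sq_nonneg (y 3 - y 6),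
      sq_nonneg (y 4 - y 5), sq_nonneg (y 4 - y 6), sq_nonneg (y 5 - y 6)]
  have h6 : 3 * ((y 0 - 1) * (y 0 - 1)) ≤ 8 := by nlinarith [cs, hsum, hsq]
  have hb1 : 0 ≤ y 0 := by
    by_contra hcon
    push_neg at hcon
    nlinarith [h6, hcon]
  have hb2 : y 0 ≤ 2 := by
    by_contra hcon
    push_neg at hcon
    nlinarith [h6, hcon]
  clear cs h6
  have hcase : y 0 = 0 ∨ y 0 = 1 ∨ y 0 = 2 := by omega
  rcases hcase with hc | hc | hc
  · -- `y = aᵢ` for some `i`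
    have hq : y 1*y 1 + y 2*y 2 + y 3*y 3 + y 4*y 4 + y 5*y 5 + y 6*y 6
        = y 1 + y 2 + y 3 + y 4 + y 5 + y 6 := by rw [hc] at hsum hsq; linarith
    have d1 := key01 (y 1) (y 2) (y 3) (y 4) (y 5) (y 6) (by linarith)
    have d2 := key01 (y 2) (y 1) (y 3) (y 4) (y 5) (y 6) (by linarith)
    have d3 := key01 (y 3) (y 1) (y 2) (y 4) (y 5) (y 6) (by linarith)
    have d4 := key01 (y 4) (y 1) (y 2) (y 3) (y 5) (y 6) (by linarith)
    have d5 := key01 (y 5) (y 1) (y 2) (y 3) (y 4) (y 6) (by linarith)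
    have d6 := key01 (y 6) (y 1) (y 2) (y 3) (y 4) (y 5) (by linarith)
    have h : ∀ i : Fin 6, y i.succ = 1 ∨ y i.succ = 0 := by
      intro i
      fin_cases i
      exacts [d1, d2, d3, d4, d5, d6]
    have hs : y (0:Fin 6).succ + y (1:Fin 6).succ + y (2:Fin 6).succ + y (3:Fin 6).succ
        + y (4:Fin 6).succ + y (5:Fin 6).succ = 1 := by
      show y 1 + y 2 + y 3 + y 4 + y 5 + y 6 = 1
      omega
    obtain ⟨i, hi⟩ := pick_one (fun i => y i.succ) h hs
    refine ⟨Sum.inl i, funext fun j => ?_⟩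
    refine Fin.cases ?_ (fun k => ?_) j
    · show (0 : ℤ) = y 0
      omega
    · rw [show gmap (Sum.inl i) = Fin.cons 0 (fun j => if j = i then 1 else 0) from rfl,
        Fin.cons_succ]
      exact (hi k).symm
  · -- `y = c_{ij}` for some pair
    have hq : y 1*y 1 + y 2*y 2 + y 3*y 3 + y 4*y 4 + y 5*y 5 + y 6*y 6
        = -(y 1 + y 2 + y 3 + y 4 + y 5 + y 6) := by rw [hc] at hsum hsq; linarith
    have d1 := keyneg (y 1) (y 2) (y 3) (y 4) (y 5) (y 6) (by linarith)
    have d2 := keyneg (y 2) (y 1) (y 3) (y 4) (y 5) (y 6) (by linarith)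
    have d3 := keyneg (y 3) (y 1) (y 2) (y 4) (y 5) (y 6) (by linarith)
    have d4 := keyneg (y 4) (y 1) (y 2) (y 3) (y 5) (y 6) (by linarith)
    have d5 := keyneg (y 5) (y 1) (y 2) (y 3) (y 4) (y 6) (by linarith)
    have d6 := keyneg (y 6) (y 1) (y 2) (y 3) (y 4) (y 5) (by linarith)
    have h : ∀ i : Fin 6, y i.succ = -1 ∨ y i.succ = 0 := by
      intro i
      fin_cases i
      exacts [d1, d2, d3, d4, d5, d6]
    have hs : y (0:Fin 6).succ + y (1:Fin 6).succ + y (2:Fin 6).succ + y (3:Fin 6).succ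
        + y (4:Fin 6).succ + y (5:Fin 6).succ = -2 := by
      show y 1 + y 2 + y 3 + y 4 + y 5 + y 6 = -2
      omega
    obtain ⟨s, hcard, hi⟩ := pick_two (fun i => y i.succ) h hs
    refine ⟨Sum.inr (Sum.inr ⟨s, hcard⟩), funext fun j => ?_⟩
    refine Fin.cases ?_ (fun k => ?_) j
    · show (1 : ℤ) = y 0
      omega
    · rw [show gmap (Sum.inr (Sum.inr ⟨s, hcard⟩))
          = Fin.cons 1 (fun j => if j ∈ s then -1 else 0) from rfl, Fin.cons_succ]
      exact (hi k).symm
  · -- `y = bᵢ` for some `i`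
    have hq : y 1*y 1 + y 2*y 2 + y 3*y 3 + y 4*y 4 + y 5*y 5 + y 6*y 6
        = -(y 1 + y 2 + y 3 + y 4 + y 5 + y 6) := by rw [hc] at hsum hsq; linarith
    have d1 := keyneg (y 1) (y 2) (y 3) (y 4) (y 5) (y 6) (by linarith)
    have d2 := keyneg (y 2) (y 1) (y 3) (y 4) (y 5) (y 6) (by linarith)
    have d3 := keyneg (y 3) (y 1) (y 2) (y 4) (y 5) (y 6) (by linarith)
    have d4 := keyneg (y 4) (y 1) (y 2) (y 3) (y 5) (y 6) (by linarith)
    have d5 := keyneg (y 5) (y 1) (y 2) (y 3) (y 4) (y 6) (by linarith)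
    have d6 := keyneg (y 6) (y 1) (y 2) (y 3) (y 4) (y 5) (by linarith)
    have h : ∀ i : Fin 6, y i.succ = -1 ∨ y i.succ = 0 := by
      intro i
      fin_cases i
      exacts [d1, d2, d3, d4, d5, d6]
    have hs : y (0:Fin 6).succ + y (1:Fin 6).succ + y (2:Fin 6).succ + y (3:Fin 6).succ
        + y (4:Fin 6).succ + y (5:Fin 6).succ = -5 := by
      show y 1 + y 2 + y 3 + y 4 + y 5 + y 6 = -5
      omega
    obtain ⟨i, hi⟩ := pick_five (fun i => y i.succ) h hs
    refine ⟨Sum.inr (Sum.inl i), funext fun j => ?_⟩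
    refine Fin.cases ?_ (fun k => ?_) j
    · show (2 : ℤ) = y 0
      omega
    · rw [show gmap (Sum.inr (Sum.inl i))
          = Fin.cons 2 (fun j => if j = i then 0 else -1) from rfl, Fin.cons_succ]
      exact (hi k).symm

/-- The 27 vectors as elements of `Yset`. -/
def gsub (u : VX) : ↥Yset := ⟨gmap u, gmap_mem u⟩

lemma gsub_bij : Function.Bijective gsub := by
  constructor
  · intro u v huv
    exact gmap_inj' u v (congrArg Subtype.val huv)
  · intro z
    obtain ⟨u, hu⟩ := gmap_surj z.1 z.2
    exact ⟨u, Subtype.ext hu⟩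

/-- The explicit isomorphism `Ω_X ≃g Ω`. -/
noncomputable def schlafliIso : ΩX ≃g Ω where
  toEquiv := Equiv.ofBijective gsub gsub_bij
  map_rel_iff' := by
    intro u v
    show Ω.Adj (gsub u) (gsub v) ↔ ΩX.Adj u v
    constructor
    · rintro ⟨-, hB⟩
      exact (adj_gmap u v).mp hB
    · intro hadj
      refine ⟨?_, (adj_gmap u v).mpr hadj⟩
      intro hEq
      exact ΩX.ne_of_adj hadj (gsub_bij.1 (Subtype.ext (congrArg Subtype.val hEq)))

/-- The graph `Ω` of the 27 lines is isomorphic to Schläfli's combinatorial graph `Ω_X`. -/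
theorem omega_iso_schlafli : Nonempty (Ω ≃g ΩX) := by
  exact ⟨schlafliIso.symm⟩
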